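/- If λ_A > 0, then the ODE system (S) admits a stationary state (u*, v*) with u* > 0 and v* > 0. -/

import Mathlib

/-- If λ_A > 0, then the ODE system (S) admits a stationary state
(u*, v*) with u* > 0 and v* > 0. -/
theorem stmt2 (ru rv κu κv μu μv : ℝ)
    (hκu : 0 < κu) (hκv : 0 < κv) (hμu : 0 < μu) (hμv : 0 < μv)
    (hlamA : 0 < (ru - μu + rv - μv +
      Real.sqrt ((ru - μu - rv + μv) ^ 2 + 4 * μu * μv)) / 2) :
    ∃ u v : ℝ, 0 < u ∧ 0 < v ∧
      (ru - κu * (u + v)) * u + μv * v - μu * u = 0 ∧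
      (rv - κv * (u + v)) * v + μu * u - μv * v = 0 := by
  set c : ℝ := 4 * μu * μv with hc
  have hc0 : 0 < c := by positivity
  set C : ℝ := Real.sqrt c with hCdef
  have hC0 : 0 ≤ C := Real.sqrt_nonneg _
  have hC2 : C ^ 2 = c := Real.sq_sqrt hc0.le
  set f : ℝ → ℝ := fun s =>
    ((ru - μu - κu * s) + (rv - μv - κv * s) +
      Real.sqrt (((ru - μu - κu * s) - (rv - μv - κv * s)) ^ 2 + c)) / 2 with hfdef
  have hfcont : Continuous f := by
    apply Continuous.div_const
    apply Continuous.add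
    · fun_prop
    · exact Real.continuous_sqrt.comp (by fun_prop)
  have hf0 : 0 < f 0 := by
    simp only [hfdef]
    norm_num
    rw [show (ru - μu - (rv - μv)) = ru - μu - rv + μv by ring]
    linarith [hlamA]
  set M : ℝ := |ru - μu| + |rv - μv| + C + 1 with hM
  have hM0 : 0 < M := by positivity
  set s₁ : ℝ := M / min κu κv with hs₁
  have hmin : 0 < min κu κv := lt_min hκu hκv
  have hs₁0 : 0 < s₁ := by positivity
  have hminM : min κu κv * s₁ = M := by rw [hs₁]; field_simp
  have hku : M ≤ κu * s₁ := by nlinarith [min_le_left κu κv, hs₁0.le]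
  have hkv : M ≤ κv * s₁ := by nlinarith [min_le_right κu κv, hs₁0.le]
  have hsqrt_le : ∀ x : ℝ, Real.sqrt (x ^ 2 + c) ≤ |x| + C := by
    intro x
    have h1 : x ^ 2 + c ≤ (|x| + C) ^ 2 := by nlinarith [abs_nonneg x, sq_abs x]
    calc Real.sqrt (x ^ 2 + c) ≤ Real.sqrt ((|x| + C) ^ 2) := Real.sqrt_le_sqrt h1
      _ = |x| + C := Real.sqrt_sq (by positivity)
  have hfs₁ : f s₁ ≤ 0 := by
    simp only [hfdef]
    set a := ru - μu - κu * s₁ with ha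
    set d := rv - μv - κv * s₁ with hd
    have h1 : Real.sqrt ((a - d) ^ 2 + c) ≤ |a - d| + C := hsqrt_le (a - d)
    have ha' : a ≤ -(|rv - μv| + C + 1) := by
      have := le_abs_self (ru - μu)
      simp only [ha]; linarith [hku, hM]
    have hd' : d ≤ -(|ru - μu| + C + 1) := by
      have := le_abs_self (rv - μv)
      simp only [hd]; linarith [hkv, hM]
    rcases abs_cases (a - d) with ⟨h2, h3⟩ | ⟨h2, h3⟩ <;>
    · have := abs_nonneg (ru - μu); have := abs_nonneg (rv - μv)
      linarith
  have hsub := intermediate_value_Icc' (le_of_lt hs₁0) hfcont.continuousOn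
  have h0mem : (0:ℝ) ∈ Set.Icc (f s₁) (f 0) := ⟨hfs₁, hf0.le⟩
  obtain ⟨s, hsmem, hfs⟩ := hsub h0mem
  have hs0 : 0 < s := by
    rcases lt_or_eq_of_le hsmem.1 with h | h
    · exact h
    · exfalso; rw [← h] at hfs; linarith
  set a := ru - μu - κu * s with ha
  set d := rv - μv - κv * s with hd
  have hfs' : a + d + Real.sqrt ((a - d) ^ 2 + c) = 0 := by
    simp only [hfdef] at hfs; linarith [hfs]
  set S := Real.sqrt ((a - d) ^ 2 + c) with hS
  have hS0 : 0 ≤ S := Real.sqrt_nonneg _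
  have hS2 : S ^ 2 = (a - d) ^ 2 + c := Real.sq_sqrt (by positivity)
  have hSgt : |a - d| < S := by
    rw [hS, show |a - d| = Real.sqrt ((a-d)^2) by rw [Real.sqrt_sq_eq_abs]]
    exact Real.sqrt_lt_sqrt (by positivity) (by linarith)
  have hsum : a + d = -S := by linarith
  have had : a * d = μu * μv := by
    linear_combination ((a + d - S)/4) * hsum + (1/4) * hS2 + (1/4) * hc
  have haneg : a < 0 := by
    rcases abs_cases (a - d) with ⟨h2, _⟩ | ⟨h2, _⟩ <;> linarith
  have hdneg : d < 0 := by
    rcases abs_cases (a - d) with ⟨h2, _⟩ | ⟨h2, _⟩ <;> linarith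
  set w : ℝ := μv - a with hw
  have hw0 : 0 < w := by simp only [hw]; linarith
  have hwne : w ≠ 0 := ne_of_gt hw0
  have huv : s * μv / w + s * (-a) / w = s := by
    field_simp
    simp only [hw]; ring
  refine ⟨s * μv / w, s * (-a) / w, div_pos (mul_pos hs0 hμv) hw0,
      div_pos (mul_pos hs0 (neg_pos.mpr haneg)) hw0, ?_, ?_⟩
  · rw [huv]
    have key : (ru - κu * s) * (s * μv) + μv * (s * (-a)) - μu * (s * μv) = 0 := by
      linear_combination (-(s * μv)) * ha
    have expand : (ru - κu * s) * (s * μv / w) + μv * (s * (-a) / w) - μu * (s * μv / w)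
        = ((ru - κu * s) * (s * μv) + μv * (s * (-a)) - μu * (s * μv)) / w := by ring
    rw [expand, key, zero_div]
  · rw [huv]
    have key : (rv - κv * s) * (s * (-a)) + μu * (s * μv) - μv * (s * (-a)) = 0 := by
      linear_combination (-s) * had + (s * a) * hd
    have expand : (rv - κv * s) * (s * (-a) / w) + μu * (s * μv / w) - μv * (s * (-a) / w)
        = ((rv - κv * s) * (s * (-a)) + μu * (s * μv) - μv * (s * (-a))) / w := by ring
    rw [expand, key, zero_div]
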